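/- arXiv:1804.02100 — 3 statements merged into one kernel-verified Lean document; each statement's English description precedes it below -/
import Mathlib

section
/- For ρ > 0 and m ∈ ℕ, define B_m = ∑_{n=0}^{m} ρ^n/n! and F(m) = B_{m-1}/B_m for m ≥ 1 with F(0) = 0. Then F is strictly increasing in m: F(m) < F(m+1) for all m ≥ 0. -/
/-- With `B_m = ∑_{n=0}^m ρ^n/n!` and `F(m) = B_{m-1}/B_m` (so `F(0) = 0`,
as the empty sum is `0`), the function `F` is strictly increasing in `m`. -/
theorem stmt4 (ρ : ℝ) (hρ : 0 < ρ) :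
    ∀ m : ℕ,
      (∑ n ∈ Finset.range m, ρ ^ n / n.factorial) /
          (∑ n ∈ Finset.range (m + 1), ρ ^ n / n.factorial)
        < (∑ n ∈ Finset.range (m + 1), ρ ^ n / n.factorial) /
            (∑ n ∈ Finset.range (m + 2), ρ ^ n / n.factorial) := by
  have hterm : ∀ n : ℕ, 0 < ρ ^ n / n.factorial := fun n =>
    div_pos (pow_pos hρ n) (by positivity)
  have hS : ∀ k : ℕ, 0 < ∑ n ∈ Finset.range (k + 1), ρ ^ n / n.factorial :=
    fun k => Finset.sum_pos (fun i _ => hterm i) ⟨0, Finset.mem_range.2 (Nat.succ_pos k)⟩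
  have ht : ∀ m : ℕ, ρ * (ρ ^ m / m.factorial)
      = ((m : ℝ) + 1) * (ρ ^ (m + 1) / (m + 1).factorial) := by
    intro m
    rw [Nat.factorial_succ]
    have hm : (0 : ℝ) < m.factorial := by positivity
    push_cast
    field_simp
    ring
  have key : ∀ m : ℕ, ρ * ∑ n ∈ Finset.range m, ρ ^ n / n.factorial
      < ((m : ℝ) + 1) * ∑ n ∈ Finset.range (m + 1), ρ ^ n / n.factorial := by
    intro m
    induction m with
    | zero => simpa using hρ.le.trans_lt (by simpa using one_pos)
    | succ m ih =>
      rw [Finset.sum_range_succ, Finset.sum_range_succ (f := fun n => ρ ^ n / n.factorial) (n := m + 1)]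
      have h1 := hS m
      have h2 := hterm (m + 1)
      have h3 := ht m
      push_cast
      nlinarith [ih, h1, h2, h3]
  intro m
  rw [div_lt_div_iff₀ (hS m) (hS (m + 1))]
  have e1 : ∑ n ∈ Finset.range (m + 2), ρ ^ n / n.factorial
      = (∑ n ∈ Finset.range (m + 1), ρ ^ n / n.factorial) + ρ ^ (m + 1) / (m + 1).factorial :=
    Finset.sum_range_succ _ _
  have e2 : ∑ n ∈ Finset.range (m + 1), ρ ^ n / n.factorial
      = (∑ n ∈ Finset.range m, ρ ^ n / n.factorial) + ρ ^ m / m.factorial :=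
    Finset.sum_range_succ _ _
  have hk := key m
  have hm := mul_lt_mul_of_pos_left hk (hterm m)
  have h3 := ht m
  have h4 : (ρ * (ρ ^ m / m.factorial)) * (∑ n ∈ Finset.range m, ρ ^ n / n.factorial)
      = (((m : ℝ) + 1) * (ρ ^ (m + 1) / (m + 1).factorial)) * (∑ n ∈ Finset.range m, ρ ^ n / n.factorial) := by
    rw [h3]
  have hpos : (0 : ℝ) < (m : ℝ) + 1 := by positivity
  rw [e2] at hm
  rw [show m + 1 + 1 = m + 2 from rfl, e1, e2]
  nlinarith [hm, h4, hpos, hterm m, hterm (m + 1)]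
end

section
/- In the relaxed resource allocation problem, for any given multipliers γ ∈ ℝ_{≥0}^J, ν ∈ ℝ^L, the policy that activates pattern i in state n < |𝒩_i|-1 if and only if Ξ_i(γ,ν) > 0, where Ξ_i(γ,ν) = λ_{ℓ(i)}(r_{ℓ(i)} - (1/μ_i)∑_{j} ε_j w_{j,i}) - (1 + λ_{ℓ(i)}/μ_i)∑_{j} w_{j,i} γ_j - ν_{ℓ(i)}, maximizes the Lagrangian term Λ_i for each sub-problem i (for sufficiently large penalty η_i); moreover the optimal activation decision is independent of the state n (for n < |𝒩_i|-1). -/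
open Finset

/-- Unnormalized stationary measure of the birth-and-death sub-process for a
pattern under a (randomized) policy `α`: state `n` has weight
`∏_{k<n} α(k)λ / ((k+1)μ)`. -/
noncomputable def unnorm (lam mu : ℝ) (α : ℕ → ℝ) (n : ℕ) : ℝ :=
  ∏ k ∈ Finset.range n, (α k * lam) / (((k : ℝ) + 1) * mu)

/-- Stationary distribution on states `{0,…,K}` of the sub-process under
policy `α`. -/
noncomputable def statDist (lam mu : ℝ) (K : ℕ) (α : ℕ → ℝ) (n : ℕ) : ℝ :=
  unnorm lam mu α n / ∑ k ∈ Finset.range (K + 1), unnorm lam mu α k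

/-- Lagrangian term `Λ_i` of the sub-problem for a pattern with reward `r`,
service rate `mu`, weights `w`, multipliers `ν` (action), `γ` (capacity) and
`η` (boundary), cost rates `eps`. -/
noncomputable def Lag (lam mu r ν η : ℝ) {J : ℕ} (w eps γ : Fin J → ℝ) (K : ℕ)
    (α : ℕ → ℝ) : ℝ :=
  (r * mu - ∑ j, eps j * w j) * (∑ n ∈ Finset.range (K + 1), statDist lam mu K α n * n)
    - ν * (∑ n ∈ Finset.range (K + 1), statDist lam mu K α n * α n)
    - (∑ j, γ j * w j) *
        ((∑ n ∈ Finset.range (K + 1), statDist lam mu K α n * n)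
          + ∑ n ∈ Finset.range (K + 1), statDist lam mu K α n * α n)
    - η * statDist lam mu K α K * α K

/-- The index `Ξ_i(γ,ν)` of a pattern. -/
noncomputable def XiIdx (lam mu r ν : ℝ) {J : ℕ} (w eps γ : Fin J → ℝ) : ℝ :=
  lam * (r - (1 / mu) * ∑ j, eps j * w j) - (1 + lam / mu) * (∑ j, w j * γ j) - ν

lemma unnorm_zero (lam mu : ℝ) (α : ℕ → ℝ) : unnorm lam mu α 0 = 1 := by simp [unnorm]

lemma unnorm_succ (lam mu : ℝ) (α : ℕ → ℝ) (n : ℕ) :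
    unnorm lam mu α (n + 1) = unnorm lam mu α n * (α n * lam / (((n : ℝ) + 1) * mu)) := by
  simp only [unnorm, Finset.prod_range_succ]

lemma unnorm_nonneg (lam mu : ℝ) (hlam : 0 ≤ lam) (hmu : 0 ≤ mu) (α : ℕ → ℝ)
    (hα : ∀ n, 0 ≤ α n) (n : ℕ) : 0 ≤ unnorm lam mu α n := by
  apply Finset.prod_nonneg
  intro k _
  apply div_nonneg (mul_nonneg (hα k) hlam)
  have : (0:ℝ) ≤ (k:ℝ) + 1 := by positivity
  exact mul_nonneg this hmu

lemma sumU_pos (lam mu : ℝ) (hlam : 0 ≤ lam) (hmu : 0 ≤ mu) (α : ℕ → ℝ)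
    (hα : ∀ n, 0 ≤ α n) (K : ℕ) :
    0 < ∑ k ∈ Finset.range (K + 1), unnorm lam mu α k := by
  rw [Finset.sum_range_succ']
  have h0 : unnorm lam mu α 0 = 1 := unnorm_zero lam mu α
  have h : 0 ≤ ∑ k ∈ Finset.range K, unnorm lam mu α (k + 1) :=
    Finset.sum_nonneg fun k _ => unnorm_nonneg lam mu hlam hmu α hα (k + 1)
  rw [h0]; linarith

lemma balance (lam mu : ℝ) (hlam : lam ≠ 0) (hmu : mu ≠ 0) (α : ℕ → ℝ) (K : ℕ) :
    ∑ n ∈ Finset.range (K + 1), unnorm lam mu α n * α n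
      = (mu / lam) * ∑ n ∈ Finset.range (K + 1), unnorm lam mu α n * n
        + unnorm lam mu α K * α K := by
  rw [Finset.sum_range_succ]
  congr 1
  rw [Finset.sum_range_succ' (fun n => unnorm lam mu α n * (n : ℝ)) K]
  simp only [Nat.cast_zero, mul_zero, add_zero, Finset.mul_sum]
  apply Finset.sum_congr rfl
  intro n _
  rw [unnorm_succ]
  have h1 : ((n : ℝ) + 1) ≠ 0 := by positivity
  push_cast
  field_simp

lemma P_mono (α : ℕ → ℝ) (hα : ∀ n, 0 ≤ α n ∧ α n ≤ 1) :
    ∀ d n : ℕ, (∏ k ∈ Finset.range (n + d), α k) ≤ ∏ k ∈ Finset.range n, α k := by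
  intro d
  induction d with
  | zero => intro n; simp
  | succ d ih =>
    intro n
    have h0 : 0 ≤ ∏ k ∈ Finset.range (n + d), α k :=
      Finset.prod_nonneg fun k _ => (hα k).1
    calc ∏ k ∈ Finset.range (n + (d + 1)), α k
        = (∏ k ∈ Finset.range (n + d), α k) * α (n + d) := by
          rw [show n + (d + 1) = (n + d) + 1 from rfl, Finset.prod_range_succ]
      _ ≤ (∏ k ∈ Finset.range (n + d), α k) * 1 :=
          mul_le_mul_of_nonneg_left (hα _).2 h0
      _ = ∏ k ∈ Finset.range (n + d), α k := mul_one _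
      _ ≤ _ := ih n

lemma cross_ineq (s : Finset ℕ) (v P : ℕ → ℝ) (hv : ∀ n, 0 ≤ v n)
    (hP : ∀ n m : ℕ, n ≤ m → P m ≤ P n) :
    (∑ n ∈ s, (n : ℝ) * (P n * v n)) * (∑ m ∈ s, v m) ≤
      (∑ n ∈ s, (n : ℝ) * v n) * (∑ m ∈ s, P m * v m) := by
  have key : ∑ n ∈ s, ∑ m ∈ s, ((n : ℝ) - m) * (P n - P m) * (v n * v m) ≤ 0 := by
    apply Finset.sum_nonpos
    intro n _
    apply Finset.sum_nonpos
    intro m _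
    have hvv : 0 ≤ v n * v m := mul_nonneg (hv n) (hv m)
    rcases le_total n m with h | h
    · have h1 : (n : ℝ) - m ≤ 0 := by
        have : (n:ℝ) ≤ m := Nat.cast_le.2 h
        linarith
      have h2 : 0 ≤ P n - P m := sub_nonneg.2 (hP n m h)
      have := mul_nonpos_of_nonpos_of_nonneg h1 h2
      exact mul_nonpos_of_nonpos_of_nonneg this hvv
    · have h1 : 0 ≤ (n : ℝ) - m := by
        have : (m:ℝ) ≤ n := Nat.cast_le.2 h
        linarith
      have h2 : P n - P m ≤ 0 := sub_nonpos.2 (hP m n h)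
      have := mul_nonpos_of_nonneg_of_nonpos h1 h2
      exact mul_nonpos_of_nonpos_of_nonneg this hvv
  have e1 : ∑ n ∈ s, ∑ m ∈ s, ((n : ℝ) - m) * (P n - P m) * (v n * v m)
      = ∑ n ∈ s, ∑ m ∈ s, (((n:ℝ) * P n * (v n * v m) + (m:ℝ) * P m * (v n * v m))
          - ((n:ℝ) * P m * (v n * v m) + (m:ℝ) * P n * (v n * v m))) := by
    refine Finset.sum_congr rfl fun n _ => Finset.sum_congr rfl fun m _ => by ring
  have e2 : ∑ n ∈ s, ∑ m ∈ s, (m:ℝ) * P m * (v n * v m)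
      = ∑ n ∈ s, ∑ m ∈ s, (n:ℝ) * P n * (v n * v m) := by
    rw [Finset.sum_comm]
    refine Finset.sum_congr rfl fun n _ => Finset.sum_congr rfl fun m _ => by ring
  have e3 : ∑ n ∈ s, ∑ m ∈ s, (m:ℝ) * P n * (v n * v m)
      = ∑ n ∈ s, ∑ m ∈ s, (n:ℝ) * P m * (v n * v m) := by
    rw [Finset.sum_comm]
    refine Finset.sum_congr rfl fun n _ => Finset.sum_congr rfl fun m _ => by ring
  have e4 : (∑ n ∈ s, (n:ℝ) * (P n * v n)) * (∑ m ∈ s, v m)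
      = ∑ n ∈ s, ∑ m ∈ s, (n:ℝ) * P n * (v n * v m) := by
    rw [Finset.sum_mul_sum]
    refine Finset.sum_congr rfl fun n _ => Finset.sum_congr rfl fun m _ => by ring
  have e5 : (∑ n ∈ s, (n:ℝ) * v n) * (∑ m ∈ s, P m * v m)
      = ∑ n ∈ s, ∑ m ∈ s, (n:ℝ) * P m * (v n * v m) := by
    rw [Finset.sum_mul_sum]
    refine Finset.sum_congr rfl fun n _ => Finset.sum_congr rfl fun m _ => by ring
  have e6 : ∑ n ∈ s, ∑ m ∈ s, (((n:ℝ) * P n * (v n * v m) + (m:ℝ) * P m * (v n * v m))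
          - ((n:ℝ) * P m * (v n * v m) + (m:ℝ) * P n * (v n * v m)))
      = (∑ n ∈ s, ∑ m ∈ s, (n:ℝ) * P n * (v n * v m)
          + ∑ n ∈ s, ∑ m ∈ s, (m:ℝ) * P m * (v n * v m))
        - (∑ n ∈ s, ∑ m ∈ s, (n:ℝ) * P m * (v n * v m)
          + ∑ n ∈ s, ∑ m ∈ s, (m:ℝ) * P n * (v n * v m)) := by
    simp only [Finset.sum_sub_distrib, Finset.sum_add_distrib]
  rw [e1, e6, e2, e3] at key
  linarith [e4, e5, key]

lemma Lag_eq (lam mu r ν η : ℝ) {J : ℕ} (w eps γ : Fin J → ℝ) (K : ℕ) (α : ℕ → ℝ)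
    (hlam : lam ≠ 0) (hmu : mu ≠ 0)
    (hS : (∑ k ∈ Finset.range (K + 1), unnorm lam mu α k) ≠ 0) :
    Lag lam mu r ν η w eps γ K α =
      ((mu / lam) * XiIdx lam mu r ν w eps γ *
          (∑ n ∈ Finset.range (K + 1), unnorm lam mu α n * n)
        - (ν + (∑ j, w j * γ j) + η) * (unnorm lam mu α K * α K))
      / (∑ k ∈ Finset.range (K + 1), unnorm lam mu α k) := by
  have hG : (∑ j, γ j * w j) = ∑ j, w j * γ j :=
    Finset.sum_congr rfl fun j _ => mul_comm _ _
  simp only [Lag, statDist, XiIdx]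
  set S := ∑ k ∈ Finset.range (K + 1), unnorm lam mu α k with hSdef
  have h1 : ∑ n ∈ Finset.range (K + 1), unnorm lam mu α n / S * n
      = (∑ n ∈ Finset.range (K + 1), unnorm lam mu α n * n) / S := by
    rw [Finset.sum_div]
    exact Finset.sum_congr rfl fun n _ => by ring
  have h2 : ∑ n ∈ Finset.range (K + 1), unnorm lam mu α n / S * α n
      = (∑ n ∈ Finset.range (K + 1), unnorm lam mu α n * α n) / S := by
    rw [Finset.sum_div]
    exact Finset.sum_congr rfl fun n _ => by ring
  rw [h1, h2, balance lam mu hlam hmu α K, hG]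
  field_simp
  ring

open Classical in
/-- Proposition 1: for given multipliers `γ ≥ 0`, `ν`, and sufficiently large
boundary penalty `η`, the state-independent policy that activates a
(non-boundary) state `n < K` if and only if `Ξ_i(γ,ν) > 0` maximizes the
Lagrangian `Λ_i` of the sub-problem over all randomized policies. -/
theorem stmt6 (lam mu r ν : ℝ) (hlam : 0 < lam) (hmu : 0 < mu)
    (J K : ℕ) (hK : 0 < K) (w eps γ : Fin J → ℝ) (hγ : ∀ j, 0 ≤ γ j) :
    ∃ E : ℝ, ∀ η : ℝ, E < η → ∀ α : ℕ → ℝ, (∀ n, 0 ≤ α n ∧ α n ≤ 1) →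
      Lag lam mu r ν η w eps γ K α ≤
        Lag lam mu r ν η w eps γ K
          (fun n => if 0 < XiIdx lam mu r ν w eps γ ∧ n < K then (1 : ℝ) else 0) := by
  classical
  set Ξ := XiIdx lam mu r ν w eps γ with hΞdef
  set C := ∑ j, w j * γ j with hCdef
  refine ⟨-(ν + C), ?_⟩
  intro η hη α hα
  have hc : 0 < ν + C + η := by linarith
  set β : ℕ → ℝ := fun n => if 0 < Ξ ∧ n < K then (1 : ℝ) else 0 with hβdef
  have hβprop : ∀ n, 0 ≤ β n ∧ β n ≤ 1 := by
    intro n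
    by_cases h : 0 < Ξ ∧ n < K <;> simp [hβdef, h]
  have hβK : β K = 0 := by simp [hβdef]
  have hSα : 0 < ∑ k ∈ Finset.range (K + 1), unnorm lam mu α k :=
    sumU_pos lam mu hlam.le hmu.le α (fun n => (hα n).1) K
  have hSβ : 0 < ∑ k ∈ Finset.range (K + 1), unnorm lam mu β k :=
    sumU_pos lam mu hlam.le hmu.le β (fun n => (hβprop n).1) K
  have hMα : 0 ≤ ∑ n ∈ Finset.range (K + 1), unnorm lam mu α n * n :=
    Finset.sum_nonneg fun n _ =>
      mul_nonneg (unnorm_nonneg lam mu hlam.le hmu.le α (fun k => (hα k).1) n) (Nat.cast_nonneg n)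
  have hUK : 0 ≤ unnorm lam mu α K * α K :=
    mul_nonneg (unnorm_nonneg lam mu hlam.le hmu.le α (fun k => (hα k).1) K) (hα K).1
  rw [Lag_eq lam mu r ν η w eps γ K α hlam.ne' hmu.ne' hSα.ne',
      Lag_eq lam mu r ν η w eps γ K β hlam.ne' hmu.ne' hSβ.ne']
  rw [← hΞdef, ← hCdef, hβK, mul_zero, mul_zero, sub_zero]
  by_cases hpos : 0 < Ξ
  · -- penalty term for α is nonpositive, then compare means
    have hMcompare : (∑ n ∈ Finset.range (K + 1), unnorm lam mu α n * n)
        / (∑ k ∈ Finset.range (K + 1), unnorm lam mu α k)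
        ≤ (∑ n ∈ Finset.range (K + 1), unnorm lam mu β n * n)
        / (∑ k ∈ Finset.range (K + 1), unnorm lam mu β k) := by
      rw [div_le_div_iff₀ hSα hSβ]
      have hfac : ∀ n ∈ Finset.range (K + 1),
          unnorm lam mu α n = (∏ k ∈ Finset.range n, α k) * unnorm lam mu β n := by
        intro n hn
        have hnK : n ≤ K := Nat.lt_succ_iff.1 (Finset.mem_range.1 hn)
        simp only [unnorm, ← Finset.prod_mul_distrib]
        apply Finset.prod_congr rfl
        intro k hk
        have hkK : k < K := lt_of_lt_of_le (Finset.mem_range.1 hk) hnK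
        rw [hβdef]
        simp only [if_pos (And.intro hpos hkK)]
        ring
      have hv : ∀ n, 0 ≤ unnorm lam mu β n :=
        unnorm_nonneg lam mu hlam.le hmu.le β (fun k => (hβprop k).1)
      have hP : ∀ n m : ℕ, n ≤ m →
          (∏ k ∈ Finset.range m, α k) ≤ ∏ k ∈ Finset.range n, α k := by
        intro n m h
        obtain ⟨d, rfl⟩ := Nat.exists_eq_add_of_le h
        exact P_mono α hα d n
      have := cross_ineq (Finset.range (K + 1)) (unnorm lam mu β)
        (fun n => ∏ k ∈ Finset.range n, α k) hv hP
      calc (∑ n ∈ Finset.range (K + 1), unnorm lam mu α n * n)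
            * (∑ k ∈ Finset.range (K + 1), unnorm lam mu β k)
          = (∑ n ∈ Finset.range (K + 1),
              (n : ℝ) * ((∏ k ∈ Finset.range n, α k) * unnorm lam mu β n))
            * (∑ k ∈ Finset.range (K + 1), unnorm lam mu β k) := by
            congr 1
            refine Finset.sum_congr rfl fun n hn => ?_
            rw [hfac n hn]; ring
        _ ≤ (∑ n ∈ Finset.range (K + 1), (n : ℝ) * unnorm lam mu β n)
            * (∑ m ∈ Finset.range (K + 1),
                (∏ k ∈ Finset.range m, α k) * unnorm lam mu β m) := this
        _ = (∑ n ∈ Finset.range (K + 1), unnorm lam mu β n * n)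
            * (∑ k ∈ Finset.range (K + 1), unnorm lam mu α k) := by
            congr 1
            · exact Finset.sum_congr rfl fun n _ => by ring
            · refine Finset.sum_congr rfl fun m hm => ?_
              rw [hfac m hm]
    have hcoef : 0 ≤ (mu / lam) * Ξ := by positivity
    calc ((mu / lam) * Ξ * (∑ n ∈ Finset.range (K + 1), unnorm lam mu α n * n)
            - (ν + C + η) * (unnorm lam mu α K * α K))
          / (∑ k ∈ Finset.range (K + 1), unnorm lam mu α k)
        ≤ ((mu / lam) * Ξ * (∑ n ∈ Finset.range (K + 1), unnorm lam mu α n * n))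
          / (∑ k ∈ Finset.range (K + 1), unnorm lam mu α k) := by
          rw [div_le_div_iff_of_pos_right hSα]
          nlinarith [mul_nonneg hc.le hUK]
      _ = (mu / lam) * Ξ * ((∑ n ∈ Finset.range (K + 1), unnorm lam mu α n * n)
          / (∑ k ∈ Finset.range (K + 1), unnorm lam mu α k)) := by ring
      _ ≤ (mu / lam) * Ξ * ((∑ n ∈ Finset.range (K + 1), unnorm lam mu β n * n)
          / (∑ k ∈ Finset.range (K + 1), unnorm lam mu β k)) :=
          mul_le_mul_of_nonneg_left hMcompare hcoef
      _ = ((mu / lam) * Ξ * (∑ n ∈ Finset.range (K + 1), unnorm lam mu β n * n))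
          / (∑ k ∈ Finset.range (K + 1), unnorm lam mu β k) := by ring
  · -- Ξ ≤ 0 : right-hand side is 0, left is ≤ 0
    have hΞle : Ξ ≤ 0 := le_of_not_gt hpos
    have hβ0 : β 0 = 0 := by
      rw [hβdef]; simp [hpos]
    have hMβ : ∑ n ∈ Finset.range (K + 1), unnorm lam mu β n * n = 0 := by
      apply Finset.sum_eq_zero
      intro n _
      match n with
      | 0 => simp
      | Nat.succ m =>
        have : unnorm lam mu β (m + 1) = 0 := by
          apply Finset.prod_eq_zero (Finset.mem_range.2 (Nat.succ_pos m))
          rw [hβ0]; simp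
        rw [this, zero_mul]
    rw [hMβ, mul_zero, zero_div]
    apply div_nonpos_of_nonpos_of_nonneg ?_ hSα.le
    have h1 : (mu / lam) * Ξ * (∑ n ∈ Finset.range (K + 1), unnorm lam mu α n * n) ≤ 0 := by
      apply mul_nonpos_of_nonpos_of_nonneg ?_ hMα
      have : 0 ≤ mu / lam := by positivity
      exact mul_nonpos_of_nonneg_of_nonpos this hΞle
    nlinarith [mul_nonneg hc.le hUK]
end

section
/- Let o be a ranking of pattern-state pairs and let ℐ(o) be the set of critical pairs produced by the priority algorithm (each critical pair ι ∈ ℐ(o) has an associated critical resource pool j_ι at which a capacity constraint first binds, after which all lower-priority pairs using pool j_ι are removed from the candidate list). Then the map ι ↦ i_ι from critical pairs to patterns is injective: distinct critical pairs correspond to distinct patterns. -/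
/-- Lemma 1: distinct critical pairs correspond to distinct patterns.
Pairs are ranked by priority (the order on `Fin N`); each critical pair `ι`
has a critical pool `jc ι` used by its pattern (`w (jc ι) (i ι) > 0`), and
once a pool becomes critical every lower-priority pair whose pattern uses it
is disabled (cannot be critical). -/
theorem stmt7 {N J I : ℕ} (i : Fin N → Fin I) (w : Fin J → Fin I → ℝ)
    (crit : Finset (Fin N)) (jc : Fin N → Fin J)
    (hpos : ∀ ι ∈ crit, 0 < w (jc ι) (i ι))
    (hdisable : ∀ ι ∈ crit, ∀ ι' : Fin N, ι < ι' → 0 < w (jc ι) (i ι') → ι' ∉ crit) :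
    ∀ ι ∈ crit, ∀ ι' ∈ crit, ι ≠ ι' → i ι ≠ i ι' := by
  intro ι hι ι' hι' hne heq
  rcases lt_or_gt_of_ne hne with h | h
  · exact hdisable ι hι ι' h (heq ▸ hpos ι hι) hι'
  · exact hdisable ι' hι' ι h (heq ▸ hpos ι' hι') hι
end
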